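/- Let P ⊆ ℝ^d be a finite nonempty set in general position. Then 0 ∈ conv(P) if and only if lsp(P) ⊆ pos(P). -/

import Mathlib

/-- A finite set `P ⊆ ℝ^d` is in *general position* if for every `k ≤ d` no
`k + 2` of its points lie in a `k`-dimensional affine subspace, and no proper
subset of `P` contains the origin in its convex hull. -/
def GenPos {d : ℕ} (P : Finset (EuclideanSpace ℝ (Fin d))) : Prop :=
  (∀ k : ℕ, k ≤ d → ∀ S ⊆ P, S.card = k + 2 →
    ¬ ∃ A : AffineSubspace ℝ (EuclideanSpace ℝ (Fin d)),
        Module.finrank ℝ A.direction = k ∧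
        (S : Set (EuclideanSpace ℝ (Fin d))) ⊆ (A : Set (EuclideanSpace ℝ (Fin d)))) ∧
  (∀ S ⊂ P, (0 : EuclideanSpace ℝ (Fin d)) ∉
    convexHull ℝ (S : Set (EuclideanSpace ℝ (Fin d))))

/-- `posCone P` is the set of all nonnegative linear combinations of the
points of the finite set `P`. -/
def posCone {d : ℕ} (P : Finset (EuclideanSpace ℝ (Fin d))) :
    Set (EuclideanSpace ℝ (Fin d)) :=
  {x | ∃ μ : EuclideanSpace ℝ (Fin d) → ℝ,
    (∀ p ∈ P, 0 ≤ μ p) ∧ x = ∑ p ∈ P, μ p • p}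

/-- For a finite nonempty set `P ⊆ ℝ^d` in general position, the origin lies
in the convex hull of `P` if and only if the linear span of `P` is contained
in the cone of nonnegative combinations of `P`. -/
theorem origin_in_hull_iff_span_subset_cone (d : ℕ)
    (P : Finset (EuclideanSpace ℝ (Fin d))) (hne : P.Nonempty) (hgp : GenPos P) :
    (0 : EuclideanSpace ℝ (Fin d)) ∈
        convexHull ℝ ((P : Set (EuclideanSpace ℝ (Fin d)))) ↔
      (Submodule.span ℝ ((P : Set (EuclideanSpace ℝ (Fin d)))) :
        Set (EuclideanSpace ℝ (Fin d))) ⊆ posCone P := by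
  classical
  constructor
  · intro h0 x hx
    obtain ⟨w, hw0, hw1, hwc⟩ := Finset.mem_convexHull'.mp h0
    have hpos : ∀ p ∈ P, 0 < w p := by
      intro q hq
      rcases (hw0 q hq).lt_or_eq with h | h
      · exact h
      · exfalso
        apply hgp.2 (P.erase q) (Finset.erase_ssubset hq)
        refine Finset.mem_convexHull'.mpr
          ⟨w, fun y hy => hw0 y (Finset.mem_of_mem_erase hy), ?_, ?_⟩
        · rw [Finset.sum_erase _ h.symm]; exact hw1
        · rw [Finset.sum_erase _ (by rw [← h, zero_smul])]; exact hwc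
    obtain ⟨f, -, hf⟩ := Submodule.mem_span_finset.mp hx
    set t := ∑ p ∈ P, |f p| / w p with ht
    have htnn : ∀ q ∈ P, |f q| / w q ≤ t :=
      fun q hq => Finset.single_le_sum (f := fun p => |f p| / w p)
        (fun p hp => div_nonneg (abs_nonneg _) (hpos p hp).le) hq
    refine ⟨fun p => f p + t * w p, ?_, ?_⟩
    · intro p hp
      have h1 : |f p| ≤ t * w p := by
        have h2 := htnn p hp
        rw [div_le_iff₀ (hpos p hp)] at h2
        linarith
      have := neg_abs_le (f p)
      simp only
      linarith
    · have : ∑ p ∈ P, (f p + t * w p) • p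
          = ∑ p ∈ P, f p • p + t • ∑ p ∈ P, w p • p := by
        rw [Finset.smul_sum, ← Finset.sum_add_distrib]
        refine Finset.sum_congr rfl fun p hp => ?_
        rw [add_smul, smul_smul]
      rw [this, hf, hwc, smul_zero, add_zero]
  · intro h
    obtain ⟨p0, hp0⟩ := hne
    have hmem : -p0 ∈ (Submodule.span ℝ (P : Set (EuclideanSpace ℝ (Fin d))) :
        Set (EuclideanSpace ℝ (Fin d))) :=
      neg_mem (Submodule.subset_span hp0)
    obtain ⟨μ, hμ0, hμeq⟩ := h hmem
    set w : EuclideanSpace ℝ (Fin d) → ℝ :=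
      fun p => μ p + if p = p0 then 1 else 0 with hw
    have hwnn : ∀ p ∈ P, 0 ≤ w p := fun p hp => by
      have := hμ0 p hp; simp only [hw]; split <;> linarith
    have hsum : ∑ p ∈ P, w p • p = 0 := by
      have h1 : ∑ p ∈ P, w p • p
          = (∑ p ∈ P, μ p • p) + ∑ p ∈ P, (if p = p0 then (1:ℝ) else 0) • p := by
        rw [← Finset.sum_add_distrib]
        exact Finset.sum_congr rfl fun p _ => by rw [← add_smul]
      rw [h1, ← hμeq]
      simp only [ite_smul, one_smul, zero_smul, Finset.sum_ite_eq' P p0, hp0, if_true]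
      exact neg_add_cancel p0
    set s := ∑ p ∈ P, w p with hs
    have hs1 : (1:ℝ) ≤ s := by
      have h2 : (1:ℝ) = ∑ p ∈ P, (if p = p0 then (1:ℝ) else 0) := by
        rw [Finset.sum_ite_eq' P p0]; simp [hp0]
      rw [h2]
      refine Finset.sum_le_sum fun p hp => ?_
      have := hμ0 p hp; simp only [hw]; split <;> linarith
    have hsne : s ≠ 0 := by linarith
    refine Finset.mem_convexHull'.mpr ⟨fun p => w p / s, fun p hp =>
      div_nonneg (hwnn p hp) (by linarith), ?_, ?_⟩
    · rw [← Finset.sum_div, ← hs, div_self hsne]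
    · have h3 : ∑ p ∈ P, (w p / s) • p = s⁻¹ • ∑ p ∈ P, w p • p := by
        rw [Finset.smul_sum]
        refine Finset.sum_congr rfl fun p _ => ?_
        rw [smul_smul, div_eq_inv_mul]
      rw [h3, hsum, smul_zero]
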